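/- For every ε > 0 there exist convex bodies K, T ⊂ ℝⁿ with Vol_n(K) = Vol_n(T) = 1 and Vol_n(K ∩ T) < ε, both containing the origin. Consequently, with φ = ‖·‖_K and ψ = ‖·‖_T, the ratio Vol(φ ⊠_{1/2} ψ) / min{Vol(φ), Vol(ψ)} = Vol_n(K ∩ T) can be made arbitrarily small; i.e., the volume functional Vol(φ) = ∫ e^{-φ} is not quasi-concave with respect to the ⊠ structure. -/

import Mathlib

open MeasureTheory ENNReal

open Real Set in
theorem my_lint_exp_mul_abs {c : ℝ} (hc : 0 < c) :
    ∫⁻ t : ℝ, ENNReal.ofReal (Real.exp (-(c * |t|))) = ENNReal.ofReal (2 / c) := by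
  have h1 : IntegrableOn (fun t : ℝ => Real.exp (-(c * t))) (Ioi 0) := by
    simpa [neg_mul] using exp_neg_integrableOn_Ioi 0 hc
  have h2 : IntegrableOn (fun t : ℝ => Real.exp (-(c * |t|))) (Ioi 0) :=
    h1.congr_fun (fun x hx => by rw [abs_of_pos hx]) measurableSet_Ioi
  have h3 : IntegrableOn (fun t : ℝ => Real.exp (-(c * |t|))) (Iic 0) := by
    have m : MeasurableEmbedding fun x : ℝ => -x := (Homeomorph.neg ℝ).measurableEmbedding
    rw [← Measure.map_neg_eq_self (volume : Measure ℝ), m.integrableOn_map_iff]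
    simp_rw [Function.comp_def, abs_neg, neg_preimage, neg_Iic, neg_zero]
    exact Iff.mpr integrableOn_Ici_iff_integrableOn_Ioi h2
  have hint : Integrable (fun t : ℝ => Real.exp (-(c * |t|))) := by
    rw [← integrableOn_univ, ← Iic_union_Ioi (a := (0:ℝ))]
    exact h3.union h2
  rw [← ofReal_integral_eq_lintegral_ofReal hint
    (Filter.Eventually.of_forall fun _ => (Real.exp_pos _).le)]
  congr 1
  have h4 : ∫ x in Ioi (0:ℝ), Real.exp (-(c * x)) = c⁻¹ := by
    have := integral_comp_mul_left_Ioi (fun x => Real.exp (-x)) 0 hc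
    simp only [mul_zero, integral_exp_neg_Ioi_zero, smul_eq_mul, mul_one] at this
    simpa [neg_mul] using this
  rw [integral_comp_abs (f := fun x => Real.exp (-(c * x))), h4]
  ring

open Real Set in
theorem my_lintegral_pi_prod : ∀ {n : ℕ} (f : Fin n → ℝ → ℝ≥0∞), (∀ i, Measurable (f i)) →
    ∫⁻ x : Fin n → ℝ, ∏ i, f i (x i) = ∏ i, ∫⁻ t, f i t := by
  intro n
  induction n with
  | zero =>
      intro f hf
      simp [volume_pi, Measure.pi_empty_univ]
  | succ n ih =>
      intro f hf
      have hmp := MeasureTheory.volume_preserving_piFinSuccAbove (fun _ : Fin (n + 1) => ℝ) 0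
      have hg : Measurable fun y : ℝ × (Fin n → ℝ) =>
          f 0 y.1 * ∏ j : Fin n, f j.succ (y.2 j) :=
        ((hf 0).comp measurable_fst).mul
          (Finset.measurable_prod _ fun j _ =>
            (hf j.succ).comp ((measurable_pi_apply j).comp measurable_snd))
      calc ∫⁻ x : Fin (n + 1) → ℝ, ∏ i, f i (x i)
          = ∫⁻ y : ℝ × (Fin n → ℝ), f 0 y.1 * ∏ j : Fin n, f j.succ (y.2 j) := by
            rw [← hmp.lintegral_comp hg]
            refine lintegral_congr fun x => ?_
            rw [Fin.prod_univ_succ]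
            simp [MeasurableEquiv.piFinSuccAbove, Fin.zero_succAbove, Fin.tail]
        _ = (∫⁻ t, f 0 t) * ∏ j : Fin n, ∫⁻ t, f j.succ t := by
            rw [Measure.volume_eq_prod,
              lintegral_prod_mul (f := fun t => f 0 t)
                (g := fun v : Fin n → ℝ => ∏ j : Fin n, f j.succ (v j))
                (hf 0).aemeasurable
                (Finset.measurable_prod _ fun j _ =>
                  (hf j.succ).comp (measurable_pi_apply j)).aemeasurable,
              ih _ fun j => hf j.succ]
        _ = ∏ i, ∫⁻ t, f i t := (Fin.prod_univ_succ (fun i => ∫⁻ t, f i t)).symm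

open Real Set in
theorem my_box_gauge_lower {n : ℕ} {a : Fin n → ℝ} (ha : ∀ i, 0 < a i)
    (x : Fin n → ℝ) (i : Fin n) :
    |x i| / a i ≤ gauge (Set.univ.pi fun j => Icc (-(a j)) (a j)) x := by
  have habs : Absorbent ℝ (Set.univ.pi fun j => Icc (-(a j)) (a j)) := by
    refine absorbent_nhds_zero ?_
    refine set_pi_mem_nhds finite_univ fun j _ => ?_
    refine Icc_mem_nhds ?_ ?_
    · simpa using neg_lt_zero.mpr (ha j)
    · simpa using ha j
  refine le_csInf habs.gauge_set_nonempty ?_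
  rintro r ⟨hr, hx⟩
  obtain ⟨y, hy, rfl⟩ := hx
  have hyi := hy i (mem_univ i)
  have habs' : |y i| ≤ a i := abs_le.mpr ⟨hyi.1, hyi.2⟩
  rw [div_le_iff₀ (ha i)]
  calc |(r • y) i| = r * |y i| := by simp [abs_mul, abs_of_pos hr]
    _ ≤ r * a i := mul_le_mul_of_nonneg_left habs' hr.le

/-- For every `ε > 0` there are convex bodies `K, T` of unit volume containing the origin
with `Vol(K ∩ T) < ε`; consequently `∫ e^{-‖·‖_{K∩T}} < ε · min(∫ e^{-‖·‖_K}, ∫ e^{-‖·‖_T})`,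
so the volume functional is not quasi-concave with respect to `⊠` (recall
`‖·‖_K ⊠_{1/2} ‖·‖_T = ‖·‖_{K∩T}`). -/
theorem vol_not_quasiConcave (n : ℕ) (hn : 0 < n) (ε : ℝ) (hε : 0 < ε) :
    ∃ K T : Set (Fin n → ℝ),
      Convex ℝ K ∧ Convex ℝ T ∧ IsCompact K ∧ IsCompact T ∧
      (0 : Fin n → ℝ) ∈ interior K ∧ (0 : Fin n → ℝ) ∈ interior T ∧
      volume K = 1 ∧ volume T = 1 ∧ volume (K ∩ T) < ENNReal.ofReal ε ∧
      (∫⁻ x, ENNReal.ofReal (Real.exp (-gauge (K ∩ T) x))) <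
        ENNReal.ofReal ε *
          min (∫⁻ x, ENNReal.ofReal (Real.exp (-gauge K x)))
            (∫⁻ x, ENNReal.ofReal (Real.exp (-gauge T x))) := by
  have hn' : (0:ℝ) < (n:ℝ) := by exact_mod_cast hn
  have hn1 : (1:ℝ) ≤ (n:ℝ) := by exact_mod_cast hn
  set N : ℝ := (n:ℝ)^n with hN_def
  have hN1 : (1:ℝ) ≤ N := one_le_pow₀ hn1
  have hN : 0 < N := lt_of_lt_of_le one_pos hN1
  have hεe : 0 < ε * Real.exp (-1) := mul_pos hε (Real.exp_pos _)
  set δ : ℝ := min (1/2) (ε * Real.exp (-1) / (4 * N)) with hδ_def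
  have hδpos : 0 < δ := lt_min (by norm_num) (by positivity)
  have hδhalf : δ ≤ 1/2 := min_le_left _ _
  have hδle : δ ≤ ε * Real.exp (-1) / (4 * N) := min_le_right _ _
  have hδ2 : 2 * δ * N < ε * Real.exp (-1) := by
    have h4N : 0 < 4 * N := by positivity
    have h := (le_div_iff₀ h4N).mp hδle
    nlinarith [hN, hεe, hδpos]
  have hexp1 : Real.exp (-1) < 1 := by
    have : Real.exp (-1) < Real.exp 0 := Real.exp_lt_exp.mpr (by norm_num)
    exact lt_of_lt_of_le this (by rw [Real.exp_zero])
  have h2δ : 2 * δ < ε := by nlinarith [hδpos, hN1, hε]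
  set i₀ : Fin n := ⟨0, hn⟩ with hi₀_def
  set a : Fin n → ℝ := fun i => if i = i₀ then δ else 1/2 with ha_def
  have ha : ∀ i, 0 < a i := by
    intro i
    rw [ha_def]
    dsimp only
    split_ifs with h
    · exact hδpos
    · norm_num
  set K : Set (Fin n → ℝ) := Set.univ.pi fun i =>
    Set.Icc (if i = i₀ then -δ else -(1/2)) (if i = i₀ then 1 - δ else 1/2) with hK_def
  set T : Set (Fin n → ℝ) := Set.univ.pi fun i =>
    Set.Icc (if i = i₀ then δ - 1 else -(1/2)) (if i = i₀ then δ else 1/2) with hT_def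
  set L : Set (Fin n → ℝ) := Set.univ.pi fun i => Set.Icc (-(a i)) (a i) with hL_def
  have hKT : K ∩ T = L := by
    rw [hK_def, hT_def, hL_def, ← Set.pi_inter_distrib]
    refine congrArg (Set.pi Set.univ) (funext fun i => ?_)
    by_cases h : i = i₀
    · simp only [h, eq_self_iff_true, if_true, ha_def]
      rw [Set.Icc_inter_Icc, sup_eq_left.mpr (by linarith : δ - 1 ≤ -δ),
        inf_eq_right.mpr (by linarith : δ ≤ 1 - δ)]
    · simp [ha_def, if_neg h]
  -- basic properties
  have hKconv : Convex ℝ K := convex_pi fun i _ => convex_Icc _ _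
  have hTconv : Convex ℝ T := convex_pi fun i _ => convex_Icc _ _
  have hKcomp : IsCompact K := isCompact_univ_pi fun i => isCompact_Icc
  have hTcomp : IsCompact T := isCompact_univ_pi fun i => isCompact_Icc
  have hKm : MeasurableSet K := MeasurableSet.univ_pi fun i => measurableSet_Icc
  have hTm : MeasurableSet T := MeasurableSet.univ_pi fun i => measurableSet_Icc
  have hK0 : (0 : Fin n → ℝ) ∈ interior K := by
    rw [hK_def, interior_pi_set Set.finite_univ]
    intro i _
    simp only [interior_Icc, Pi.zero_apply, Set.mem_Ioo]
    split_ifs <;> constructor <;> linarith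
  have hT0 : (0 : Fin n → ℝ) ∈ interior T := by
    rw [hT_def, interior_pi_set Set.finite_univ]
    intro i _
    simp only [interior_Icc, Pi.zero_apply, Set.mem_Ioo]
    split_ifs <;> constructor <;> linarith
  have hKvol : volume K = 1 := by
    rw [hK_def, volume_pi_pi]
    refine Finset.prod_eq_one fun i _ => ?_
    rw [Real.volume_Icc]
    split_ifs
    · have : (1 - δ) - (-δ) = 1 := by ring
      rw [this, ENNReal.ofReal_one]
    · have : (1/2 : ℝ) - (-(1/2)) = 1 := by ring
      rw [this, ENNReal.ofReal_one]
  have hTvol : volume T = 1 := by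
    rw [hT_def, volume_pi_pi]
    refine Finset.prod_eq_one fun i _ => ?_
    rw [Real.volume_Icc]
    split_ifs
    · have : δ - (δ - 1) = 1 := by ring
      rw [this, ENNReal.ofReal_one]
    · have : (1/2 : ℝ) - (-(1/2)) = 1 := by ring
      rw [this, ENNReal.ofReal_one]
  have hKTvol : volume (K ∩ T) = ENNReal.ofReal (2 * δ) := by
    rw [hKT, hL_def, volume_pi_pi]
    rw [Finset.prod_eq_single i₀ (fun b _ hb => ?_) (fun h => absurd (Finset.mem_univ i₀) h)]
    · have haa : a i₀ = δ := by simp [ha_def]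
      rw [Real.volume_Icc, haa]
      congr 1
      ring
    · have hab : a b = 1/2 := by simp [ha_def, if_neg hb]
      rw [Real.volume_Icc, hab]
      have : (1/2 : ℝ) - (-(1/2)) = 1 := by ring
      rw [this, ENNReal.ofReal_one]
  -- lower bound for the big integrals
  have hlb : ∀ S : Set (Fin n → ℝ), MeasurableSet S → volume S = 1 →
      ENNReal.ofReal (Real.exp (-1)) ≤ ∫⁻ x, ENNReal.ofReal (Real.exp (-gauge S x)) := by
    intro S hSm hSv
    have hpt : ∀ x, S.indicator (fun _ => ENNReal.ofReal (Real.exp (-1))) x ≤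
        ENNReal.ofReal (Real.exp (-gauge S x)) := by
      intro x
      by_cases hx : x ∈ S
      · rw [Set.indicator_of_mem hx]
        exact ENNReal.ofReal_le_ofReal
          (Real.exp_le_exp.mpr (neg_le_neg (gauge_le_one_of_mem hx)))
      · simp [Set.indicator_of_notMem hx]
    calc ENNReal.ofReal (Real.exp (-1))
        = ∫⁻ x, S.indicator (fun _ => ENNReal.ofReal (Real.exp (-1))) x := by
          rw [lintegral_indicator_const hSm, hSv, mul_one]
      _ ≤ _ := lintegral_mono hpt
  -- upper bound for the small integral
  set c : Fin n → ℝ := fun i => 1 / ((n:ℝ) * a i) with hc_def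
  have hc : ∀ i, 0 < c i := fun i => by
    rw [hc_def]
    have := ha i
    positivity
  have hgauge : ∀ x, ∑ i, c i * |x i| ≤ gauge L x := by
    intro x
    have h1 : ∑ i, |x i| / a i ≤ (n:ℝ) * gauge L x := by
      have := Finset.sum_le_card_nsmul Finset.univ (fun i => |x i| / a i) (gauge L x)
        (fun i _ => my_box_gauge_lower ha x i)
      simpa [Finset.card_univ, nsmul_eq_mul] using this
    have h2 : ∑ i, c i * |x i| = (1/(n:ℝ)) * ∑ i, |x i| / a i := by
      rw [Finset.mul_sum]
      refine Finset.sum_congr rfl fun i _ => ?_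
      rw [hc_def]
      have hai := (ha i).ne'
      field_simp
    rw [h2]
    calc (1/(n:ℝ)) * ∑ i, |x i| / a i ≤ (1/(n:ℝ)) * ((n:ℝ) * gauge L x) :=
          mul_le_mul_of_nonneg_left h1 (by positivity)
      _ = gauge L x := by field_simp
  have hpt : ∀ x, ENNReal.ofReal (Real.exp (-gauge L x)) ≤
      ∏ i, ENNReal.ofReal (Real.exp (-(c i * |x i|))) := by
    intro x
    rw [← ENNReal.ofReal_prod_of_nonneg (fun i _ => (Real.exp_pos _).le)]
    refine ENNReal.ofReal_le_ofReal ?_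
    have hprod : ∏ i, Real.exp (-(c i * |x i|)) = Real.exp (-∑ i, c i * |x i|) := by
      rw [← Real.exp_sum, Finset.sum_neg_distrib]
    rw [hprod]
    exact Real.exp_le_exp.mpr (neg_le_neg (hgauge x))
  have hmeasf : ∀ i : Fin n, Measurable fun t : ℝ => ENNReal.ofReal (Real.exp (-(c i * |t|))) :=
    fun i => ENNReal.measurable_ofReal.comp
      (Real.continuous_exp.comp ((continuous_const.mul continuous_abs).neg)).measurable
  have hprodval : ∏ i, (2 / c i) = 2 * δ * N := by
    have h2c : ∀ i, 2 / c i = 2 * (n:ℝ) * a i := fun i => by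
      rw [hc_def]
      have hai := (ha i).ne'
      field_simp
    have hcard : (Finset.univ.erase i₀).card = n - 1 := by
      rw [Finset.card_erase_of_mem (Finset.mem_univ i₀), Finset.card_univ, Fintype.card_fin]
    calc ∏ i, (2 / c i) = ∏ i, 2 * (n:ℝ) * a i := Finset.prod_congr rfl fun i _ => h2c i
      _ = (2 * (n:ℝ) * a i₀) * ∏ i ∈ Finset.univ.erase i₀, 2 * (n:ℝ) * a i :=
          (Finset.mul_prod_erase Finset.univ _ (Finset.mem_univ i₀)).symm
      _ = (2 * (n:ℝ) * δ) * ((n:ℝ)) ^ (n - 1) := by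
          have hoff : ∀ b ∈ Finset.univ.erase i₀, 2 * (n:ℝ) * a b = (n:ℝ) := by
            intro b hb
            have hb' : b ≠ i₀ := Finset.ne_of_mem_erase hb
            simp only [ha_def, if_neg hb']
            ring
          have haa : a i₀ = δ := by simp [ha_def]
          rw [Finset.prod_congr rfl hoff, Finset.prod_const, hcard, haa]
      _ = 2 * δ * N := by
          have hpow : (n:ℝ) * (n:ℝ) ^ (n - 1) = (n:ℝ) ^ n := by
            rw [← pow_succ', Nat.sub_add_cancel hn]
          rw [hN_def, ← hpow]
          ring
  have hmain : (∫⁻ x, ENNReal.ofReal (Real.exp (-gauge (K ∩ T) x))) ≤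
      ENNReal.ofReal (2 * δ * N) := by
    rw [hKT]
    calc ∫⁻ x, ENNReal.ofReal (Real.exp (-gauge L x))
        ≤ ∫⁻ x : Fin n → ℝ, ∏ i, ENNReal.ofReal (Real.exp (-(c i * |x i|))) :=
          lintegral_mono hpt
      _ = ∏ i, ∫⁻ t : ℝ, ENNReal.ofReal (Real.exp (-(c i * |t|))) :=
          my_lintegral_pi_prod _ hmeasf
      _ = ∏ i, ENNReal.ofReal (2 / c i) :=
          Finset.prod_congr rfl fun i _ => my_lint_exp_mul_abs (hc i)
      _ = ENNReal.ofReal (∏ i, (2 / c i)) :=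
          (ENNReal.ofReal_prod_of_nonneg fun i _ => by positivity).symm
      _ = ENNReal.ofReal (2 * δ * N) := by rw [hprodval]
  refine ⟨K, T, hKconv, hTconv, hKcomp, hTcomp, hK0, hT0, hKvol, hTvol, ?_, ?_⟩
  · rw [hKTvol]
    exact (ENNReal.ofReal_lt_ofReal_iff hε).mpr h2δ
  · calc (∫⁻ x, ENNReal.ofReal (Real.exp (-gauge (K ∩ T) x)))
        ≤ ENNReal.ofReal (2 * δ * N) := hmain
      _ < ENNReal.ofReal (ε * Real.exp (-1)) := (ENNReal.ofReal_lt_ofReal_iff hεe).mpr hδ2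
      _ = ENNReal.ofReal ε * ENNReal.ofReal (Real.exp (-1)) := ENNReal.ofReal_mul hε.le
      _ ≤ ENNReal.ofReal ε *
          min (∫⁻ x, ENNReal.ofReal (Real.exp (-gauge K x)))
            (∫⁻ x, ENNReal.ofReal (Real.exp (-gauge T x))) :=
          mul_le_mul_right (le_min (hlb K hKm hKvol) (hlb T hTm hTvol)) _
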